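/- Let M be a free abelian group of finite rank, V and W subgroups of M, and φ : V → W a group isomorphism. Define a descending chain of subgroups of M by V_{(0)} = V and V_{(i+1)} = φ(V_{(i)}) ∩ V_{(i)} (each V_{(i)} is contained in V, so φ(V_{(i)}) is defined). Then the ℚ-subspaces V_{(i)}⊗ℚ of M⊗ℚ form a weakly decreasing chain; there exists i ≤ rank(M) with V_{(i)}⊗ℚ = V_{(i+1)}⊗ℚ; and for the first such i one has V_{(j)}⊗ℚ = V_{(i)}⊗ℚ for all j ≥ i and D_φ = V_{(i)}⊗ℚ. -/

import Mathlib

/-!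
Setting: `M = ℤ^n` is a free abelian group of finite rank, `V, W` are subgroups of `M`,
and `φ : V ≃+ W` is a group isomorphism.  Inside `M ⊗ ℚ = ℚ^n`, a subgroup `U` of `M`
is identified with the `ℚ`-subspace `U ⊗ ℚ` spanned by its image, and `φ_ℚ` denotes the
unique `ℚ`-linear extension of `φ` to `V ⊗ ℚ`.
-/

/-- The canonical embedding of `ℤ^n` into `ℚ^n` (i.e. `M → M ⊗ ℚ`). -/
def embQ (n : ℕ) (x : Fin n → ℤ) : Fin n → ℚ := fun i => (x i : ℚ)

/-- `U ⊗ ℚ`, the `ℚ`-subspace of `ℚ^n` spanned by the image of a subgroup `U` of `ℤ^n`. -/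
def qSpan (n : ℕ) (U : AddSubgroup (Fin n → ℤ)) : Submodule ℚ (Fin n → ℚ) :=
  Submodule.span ℚ (embQ n '' (U : Set (Fin n → ℤ)))

/-- `RelQ V W φ x y` expresses that `x ∈ V ⊗ ℚ` and `φ_ℚ (x) = y`, where `φ_ℚ` is the
unique `ℚ`-linear extension of `φ : V ≃+ W`: there is a nonzero integer `p` clearing the
denominators of `x`, with `p • x ∈ V` and `φ (p • x) = p • y`. -/
def RelQ {n : ℕ} (V W : AddSubgroup (Fin n → ℤ)) (φ : V ≃+ W)
    (x y : Fin n → ℚ) : Prop :=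
  ∃ p : ℤ, p ≠ 0 ∧ ∃ v : V, embQ n (v : Fin n → ℤ) = p • x ∧
    embQ n ((φ v : W) : Fin n → ℤ) = p • y

/-- `D_φ`: the set of `x ∈ (V ∩ W) ⊗ ℚ` admitting a full backward orbit
`(x_k)_{k ≥ 0}` under `φ_ℚ` inside `(V ∩ W) ⊗ ℚ`, i.e. `x_0 = x` and
`φ_ℚ (x_{k+1}) = x_k` for all `k`. -/
def DSet {n : ℕ} (V W : AddSubgroup (Fin n → ℤ)) (φ : V ≃+ W) : Set (Fin n → ℚ) :=
  {x | ∃ xs : ℕ → (Fin n → ℚ), xs 0 = x ∧ (∀ k, xs k ∈ qSpan n (V ⊓ W)) ∧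
      ∀ k, RelQ V W φ (xs (k + 1)) (xs k)}


/-- The image `φ (S)` (for `S ≤ V`) as a subgroup of `M`; in general this is `φ (S ∩ V)`. -/
def imUnder {n : ℕ} (V W : AddSubgroup (Fin n → ℤ)) (φ : V ≃+ W)
    (S : AddSubgroup (Fin n → ℤ)) : AddSubgroup (Fin n → ℤ) :=
  AddSubgroup.map (W.subtype.comp φ.toAddMonoidHom) ((S ⊓ V).addSubgroupOf V)

/-- The descending chain `V_{(0)} = V`, `V_{(i+1)} = φ (V_{(i)}) ∩ V_{(i)}`. -/
def chainV {n : ℕ} (V W : AddSubgroup (Fin n → ℤ)) (φ : V ≃+ W) :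
    ℕ → AddSubgroup (Fin n → ℤ)
  | 0 => V
  | (i + 1) => imUnder V W φ (chainV V W φ i) ⊓ chainV V W φ i

namespace Statement7Aux

variable {n : ℕ}

lemma embQ_add (a b : Fin n → ℤ) : embQ n (a + b) = embQ n a + embQ n b := by
  funext i; simp [embQ]

lemma embQ_zsmul (m : ℤ) (a : Fin n → ℤ) : embQ n (m • a) = (m : ℚ) • embQ n a := by
  funext i; simp [embQ]

lemma zsmul_cast (m : ℤ) (x : Fin n → ℚ) : m • x = (m : ℚ) • x := by
  funext i; simp

lemma embQ_injective : Function.Injective (embQ n) := by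
  intro a b h
  funext i
  have := congrFun h i
  simp only [embQ] at this
  exact_mod_cast this

lemma mem_qSpan_of_clear {U : AddSubgroup (Fin n → ℤ)} {x : Fin n → ℚ} {p : ℤ} {u : Fin n → ℤ}
    (hp : p ≠ 0) (hu : u ∈ U) (h : embQ n u = (p : ℚ) • x) : x ∈ qSpan n U := by
  have hmem : embQ n u ∈ qSpan n U := Submodule.subset_span ⟨u, hu, rfl⟩
  have : ((p : ℚ)⁻¹) • embQ n u ∈ qSpan n U := Submodule.smul_mem _ _ hmem
  rwa [h, smul_smul, inv_mul_cancel₀ (by exact_mod_cast hp), one_smul] at this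

lemma exists_clear {U : AddSubgroup (Fin n → ℤ)} {x : Fin n → ℚ} (hx : x ∈ qSpan n U) :
    ∃ p : ℤ, p ≠ 0 ∧ ∃ u ∈ U, embQ n u = (p : ℚ) • x := by
  refine Submodule.span_induction ?_ ?_ ?_ ?_ hx
  · rintro x ⟨u, hu, rfl⟩
    exact ⟨1, one_ne_zero, u, hu, by simp⟩
  · exact ⟨1, one_ne_zero, 0, U.zero_mem, by funext i; simp [embQ]⟩
  · rintro x y hx hy ⟨p, hp, u, hu, hpu⟩ ⟨q, hq, v, hv, hqv⟩
    refine ⟨p * q, mul_ne_zero hp hq, q • u + p • v, U.add_mem (U.zsmul_mem hu q) (U.zsmul_mem hv p), ?_⟩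
    rw [embQ_add, embQ_zsmul, embQ_zsmul, hpu, hqv, smul_add]
    push_cast
    rw [smul_smul, smul_smul, mul_comm (q:ℚ)]
  · rintro c x hx ⟨p, hp, u, hu, hpu⟩
    refine ⟨p * c.den, mul_ne_zero hp (by exact_mod_cast c.den_ne_zero), c.num • u,
      U.zsmul_mem hu c.num, ?_⟩
    rw [embQ_zsmul, hpu, smul_smul, smul_smul]
    congr 1
    have hden : (c.den : ℚ) ≠ 0 := by exact_mod_cast c.den_ne_zero
    have hc : c * (c.den : ℚ) = c.num := by
      have := Rat.num_div_den c
      rw [div_eq_iff hden] at this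
      exact this.symm ▸ rfl
    push_cast
    rw [mul_assoc, mul_comm ((c.den:ℚ)) c, hc]
    ring

lemma qSpan_mono {A B : AddSubgroup (Fin n → ℤ)} (h : A ≤ B) : qSpan n A ≤ qSpan n B :=
  Submodule.span_mono (Set.image_mono h)

lemma qSpan_inf (A B : AddSubgroup (Fin n → ℤ)) :
    qSpan n (A ⊓ B) = qSpan n A ⊓ qSpan n B := by
  apply le_antisymm
  · exact le_inf (qSpan_mono inf_le_left) (qSpan_mono inf_le_right)
  · rintro x ⟨hxA, hxB⟩
    obtain ⟨p, hp, a, ha, hpa⟩ := exists_clear hxA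
    obtain ⟨q, hq, b, hb, hqb⟩ := exists_clear hxB
    have key : q • a = p • b := by
      apply embQ_injective
      rw [embQ_zsmul, embQ_zsmul, hpa, hqb, smul_smul, smul_smul, mul_comm]
    refine mem_qSpan_of_clear (p := q * p) (u := q • a) (mul_ne_zero hq hp) ?_ ?_
    · exact ⟨A.zsmul_mem ha q, key ▸ B.zsmul_mem hb p⟩
    · rw [embQ_zsmul, hpa, smul_smul]
      push_cast
      ring_nf

variable {V W : AddSubgroup (Fin n → ℤ)} {φ : V ≃+ W}

lemma mem_imUnder {S : AddSubgroup (Fin n → ℤ)} {y : Fin n → ℤ} :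
    y ∈ imUnder V W φ S ↔ ∃ v : V, (v : Fin n → ℤ) ∈ S ∧ ((φ v : W) : Fin n → ℤ) = y := by
  simp only [imUnder, AddSubgroup.mem_map, AddSubgroup.mem_addSubgroupOf,
    AddSubgroup.mem_inf, AddMonoidHom.coe_comp, Function.comp_apply,
    AddSubgroup.coe_subtype, AddEquiv.coe_toAddMonoidHom]
  constructor
  · rintro ⟨v, ⟨hvS, _⟩, hv⟩; exact ⟨v, hvS, hv⟩
  · rintro ⟨v, hvS, hv⟩; exact ⟨v, ⟨hvS, v.2⟩, hv⟩

lemma claimA {S : AddSubgroup (Fin n → ℤ)} (hS : S ≤ V) {y : Fin n → ℚ} :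
    y ∈ qSpan n (imUnder V W φ S) ↔ ∃ x ∈ qSpan n S, RelQ V W φ x y := by
  constructor
  · intro hy
    obtain ⟨p, hp, w, hw, hpw⟩ := exists_clear hy
    obtain ⟨v, hvS, rfl⟩ := mem_imUnder.mp hw
    have hpQ : (p : ℚ) ≠ 0 := by exact_mod_cast hp
    refine ⟨(p : ℚ)⁻¹ • embQ n (v : Fin n → ℤ), ?_, p, hp, v, ?_, ?_⟩
    · exact mem_qSpan_of_clear hp hvS (by rw [smul_smul, mul_inv_cancel₀ hpQ, one_smul])
    · rw [zsmul_cast, smul_smul, mul_inv_cancel₀ hpQ, one_smul]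
    · rw [zsmul_cast]; exact hpw
  · rintro ⟨x, hxS, p, hp, v, hv1, hv2⟩
    obtain ⟨q, hq, s, hs, hqs⟩ := exists_clear hxS
    have hpQ : (p : ℚ) ≠ 0 := by exact_mod_cast hp
    have hqQ : (q : ℚ) ≠ 0 := by exact_mod_cast hq
    have key : q • (v : Fin n → ℤ) = p • s := by
      apply embQ_injective
      rw [embQ_zsmul, embQ_zsmul, hv1, hqs, zsmul_cast, smul_smul, smul_smul, mul_comm]
    have keyV : q • v = p • (⟨s, hS hs⟩ : V) := Subtype.ext (by
      simpa using key)
    have hphi : q • ((φ v : W) : Fin n → ℤ) = p • ((φ ⟨s, hS hs⟩ : W) : Fin n → ℤ) := by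
      have h0 := congrArg φ keyV
      have h1 : φ (q • v) = q • φ v := by
        have := AddMonoidHom.map_zsmul φ.toAddMonoidHom q v
        simpa using this
      have h2 : φ (p • (⟨s, hS hs⟩ : V)) = p • φ ⟨s, hS hs⟩ := by
        have := AddMonoidHom.map_zsmul φ.toAddMonoidHom p (⟨s, hS hs⟩ : V)
        simpa using this
      rw [h1, h2] at h0
      have := congrArg (fun w : W => (w : Fin n → ℤ)) h0
      simpa using this
    have hemb : embQ n ((φ (⟨s, hS hs⟩ : V) : W) : Fin n → ℤ) = (q : ℚ) • y := by
      have h1 : (p : ℚ) • embQ n ((φ (⟨s, hS hs⟩ : V) : W) : Fin n → ℤ)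
          = (p : ℚ) • ((q : ℚ) • y) := by
        rw [← embQ_zsmul, ← hphi, embQ_zsmul, hv2, zsmul_cast, smul_smul, smul_smul,
          mul_comm]
      exact smul_right_injective _ hpQ h1
    refine mem_qSpan_of_clear hq (mem_imUnder.mpr ⟨⟨s, hS hs⟩, hs, rfl⟩) hemb

lemma chain_le_V : ∀ i, chainV V W φ i ≤ V
  | 0 => le_rfl
  | (i + 1) => inf_le_right.trans (chain_le_V i)

lemma chain_succ_le (i : ℕ) : chainV V W φ (i + 1) ≤ chainV V W φ i := inf_le_right

lemma chain_antitone : Antitone (chainV V W φ) :=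
  antitone_nat_of_succ_le chain_succ_le

lemma qSpan_chain_succ (i : ℕ) :
    qSpan n (chainV V W φ (i + 1)) =
      qSpan n (imUnder V W φ (chainV V W φ i)) ⊓ qSpan n (chainV V W φ i) := by
  rw [show chainV V W φ (i + 1) = imUnder V W φ (chainV V W φ i) ⊓ chainV V W φ i from rfl,
    qSpan_inf]

lemma imUnder_self : imUnder V W φ V = W := by
  ext y
  rw [mem_imUnder]
  constructor
  · rintro ⟨v, _, rfl⟩; exact (φ v).2
  · intro hy; exact ⟨φ.symm ⟨y, hy⟩, (φ.symm ⟨y, hy⟩).2, by simp⟩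

lemma chain_one : chainV V W φ 1 = W ⊓ V := by
  show imUnder V W φ V ⊓ V = W ⊓ V
  rw [imUnder_self]

lemma qSpan_chain_one : qSpan n (chainV V W φ 1) = qSpan n (V ⊓ W) := by
  rw [chain_one, inf_comm]

/-- If the qSpan chain stabilizes at `i`, it is constant from `i` on. -/
lemma stable_forall {i : ℕ}
    (h : qSpan n (chainV V W φ i) = qSpan n (chainV V W φ (i + 1))) :
    ∀ j, i ≤ j → qSpan n (chainV V W φ j) = qSpan n (chainV V W φ i) := by
  intro j hij
  induction j with
  | zero => rw [Nat.le_zero.mp hij]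
  | succ m ih =>
      rcases Nat.lt_or_ge i (m + 1) with hlt | hge
      · have him : i ≤ m := by omega
        have hm : qSpan n (chainV V W φ m) = qSpan n (chainV V W φ i) := ih him
        -- show Q_{m+1} = Q_i
        apply le_antisymm
        · rw [← hm]; exact qSpan_mono (chain_succ_le m)
        · intro y hy
          rw [qSpan_chain_succ]
          refine ⟨?_, hm ▸ hy⟩
          -- y ∈ Q_i = Q_{i+1} ≤ qSpan (imUnder (chain i)), get preimage x ∈ Q_i = Q_m
          have hy' : y ∈ qSpan n (imUnder V W φ (chainV V W φ i)) := by
            have := h ▸ hy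
            rw [qSpan_chain_succ] at this
            exact this.1
          obtain ⟨x, hx, hrel⟩ := (claimA (chain_le_V i)).mp hy'
          exact (claimA (chain_le_V m)).mpr ⟨x, hm.symm ▸ hx, hrel⟩
      · have : i = m + 1 := by omega
        rw [this]

lemma dset_subset_all (i : ℕ) : DSet V W φ ⊆ (qSpan n (chainV V W φ i) : Set (Fin n → ℚ)) := by
  rintro x ⟨xs, hx0, hmem, hrel⟩
  have key : ∀ m k, xs k ∈ qSpan n (chainV V W φ m) := by
    intro m
    induction m with
    | zero => exact fun k => qSpan_mono inf_le_left (hmem k)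
    | succ m ih =>
        intro k
        rw [qSpan_chain_succ]
        exact ⟨(claimA (chain_le_V m)).mpr ⟨xs (k + 1), ih (k + 1), hrel k⟩, ih k⟩
  rw [← hx0]
  exact key i 0

lemma stable_subset_dset {i : ℕ}
    (h : qSpan n (chainV V W φ i) = qSpan n (chainV V W φ (i + 1))) :
    (qSpan n (chainV V W φ i) : Set (Fin n → ℚ)) ⊆ DSet V W φ := by
  have key : ∀ y ∈ qSpan n (chainV V W φ i),
      ∃ x, x ∈ qSpan n (chainV V W φ i) ∧ RelQ V W φ x y := by
    intro y hy
    have hy' : y ∈ qSpan n (imUnder V W φ (chainV V W φ i)) := by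
      have := h ▸ hy
      rw [qSpan_chain_succ] at this
      exact this.1
    obtain ⟨x, hx, hrel⟩ := (claimA (chain_le_V i)).mp hy'
    exact ⟨x, hx, hrel⟩
  have hsub : qSpan n (chainV V W φ i) ≤ qSpan n (V ⊓ W) := by
    cases i with
    | zero =>
        rw [show qSpan n (chainV V W φ 0) = qSpan n (chainV V W φ 1) from h]
        exact le_of_eq qSpan_chain_one
    | succ m =>
        refine le_trans (qSpan_mono (chain_antitone (show 1 ≤ m + 1 by omega))) ?_
        exact le_of_eq qSpan_chain_one
  intro y hy
  let f : {x // x ∈ qSpan n (chainV V W φ i)} → {x // x ∈ qSpan n (chainV V W φ i)} :=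
    fun z => ⟨(key z.1 z.2).choose, (key z.1 z.2).choose_spec.1⟩
  refine ⟨fun k => (f^[k] ⟨y, hy⟩ : _).1, rfl, ?_, ?_⟩
  · exact fun k => hsub (f^[k] ⟨y, hy⟩).2
  · intro k
    show RelQ V W φ ((f^[k+1] ⟨y, hy⟩ : _) : Fin n → ℚ) ((f^[k] ⟨y, hy⟩ : _) : Fin n → ℚ)
    rw [Function.iterate_succ_apply']
    exact (key _ (f^[k] ⟨y, hy⟩).2).choose_spec.2

lemma exists_stable : ∃ i, i ≤ n ∧
    qSpan n (chainV V W φ i) = qSpan n (chainV V W φ (i + 1)) := by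
  by_contra hno
  push_neg at hno
  have claim : ∀ i, i ≤ n + 1 → Module.finrank ℚ (qSpan n (chainV V W φ i)) + i ≤ n := by
    intro i
    induction i with
    | zero =>
        intro _
        simpa using (Submodule.finrank_le (qSpan n (chainV V W φ 0))).trans
          (le_of_eq (Module.finrank_fin_fun ℚ))
    | succ m ih =>
        intro hm
        have hmn : m ≤ n := by omega
        have hne := hno m hmn
        have hlt : qSpan n (chainV V W φ (m + 1)) < qSpan n (chainV V W φ m) :=
          lt_of_le_of_ne (qSpan_mono (chain_succ_le m)) (fun e => hne e.symm)
        have := Submodule.finrank_lt_finrank_of_lt hlt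
        have := ih (by omega)
        omega
  have := claim (n + 1) le_rfl
  omega

end Statement7Aux

/-- Lemma 7.2(3) (construction of `D_φ`): the subspaces `V_{(i)} ⊗ ℚ` form a weakly
decreasing chain; it stabilizes at some `i ≤ n = rank M`; and for the first such `i`,
`V_{(j)} ⊗ ℚ = V_{(i)} ⊗ ℚ` for all `j ≥ i` and `D_φ = V_{(i)} ⊗ ℚ`. -/
theorem statement7 (n : ℕ) (V W : AddSubgroup (Fin n → ℤ)) (φ : V ≃+ W) :
    (∀ i, qSpan n (chainV V W φ (i + 1)) ≤ qSpan n (chainV V W φ i)) ∧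
    (∃ i, i ≤ n ∧ qSpan n (chainV V W φ i) = qSpan n (chainV V W φ (i + 1))) ∧
    ∀ i, qSpan n (chainV V W φ i) = qSpan n (chainV V W φ (i + 1)) →
      (∀ j, j < i → qSpan n (chainV V W φ j) ≠ qSpan n (chainV V W φ (j + 1))) →
      (∀ j, i ≤ j → qSpan n (chainV V W φ j) = qSpan n (chainV V W φ i)) ∧
        DSet V W φ = (qSpan n (chainV V W φ i) : Set (Fin n → ℚ)) := by
  refine ⟨fun i => Statement7Aux.qSpan_mono (Statement7Aux.chain_succ_le i), Statement7Aux.exists_stable, ?_⟩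
  intro i h _
  exact ⟨Statement7Aux.stable_forall h,
    Set.Subset.antisymm (Statement7Aux.dset_subset_all i) (Statement7Aux.stable_subset_dset h)⟩
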